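/- arXiv:2602.20729 — 2 statements merged into one kernel-verified Lean document; each statement's English description precedes it below -/
import Mathlib

section
/- Choquet integral minimum representation: if m is a supermodular capacity on a nonempty finite set Ω, then for every f : Ω → ℝ the discrete Choquet integral satisfies (C)∫ f dm = min_{P ∈ core(m)} E_P[f], i.e., there exists P* ∈ core(m) with E_{P*}[f] = (C)∫ f dm and (C)∫ f dm ≤ E_P[f] for every P ∈ core(m). -/
open Finset Filter

/-- A capacity on a finite type `Ω`: a normalized monotone set function. -/
def IsCapacity {Ω : Type*} [Fintype Ω] (m : Finset Ω → ℝ) : Prop :=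
  m ∅ = 0 ∧ m Finset.univ = 1 ∧ ∀ ⦃A B : Finset Ω⦄, A ⊆ B → m A ≤ m B

/-- The initial segment `{σ 0, …, σ (k-1)}` of an enumeration `σ` of `Ω`. -/
def prefSet {Ω : Type*} [Fintype Ω] [DecidableEq Ω]
    (σ : Fin (Fintype.card Ω) ≃ Ω) (k : ℕ) : Finset Ω :=
  (Finset.univ.filter fun j : Fin (Fintype.card Ω) => (j : ℕ) < k).image σ

/-- The Choquet sum of `f` against `m` along an enumeration `σ` of `Ω`. -/
def choquetSum {Ω : Type*} [Fintype Ω] [DecidableEq Ω]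
    (m : Finset Ω → ℝ) (f : Ω → ℝ) (σ : Fin (Fintype.card Ω) ≃ Ω) : ℝ :=
  ∑ i : Fin (Fintype.card Ω),
    f (σ i) * (m (prefSet σ ((i : ℕ) + 1)) - m (prefSet σ (i : ℕ)))

/-- An enumeration of `Ω` along which `f` is weakly decreasing. -/
noncomputable def sortedEquiv {Ω : Type*} [Fintype Ω] (f : Ω → ℝ) :
    Fin (Fintype.card Ω) ≃ Ω :=
  (Tuple.sort fun i => -f ((Fintype.equivFin Ω).symm i)).trans
    (Fintype.equivFin Ω).symm

/-- The discrete Choquet integral of `f` with respect to `m`. -/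
noncomputable def choquet {Ω : Type*} [Fintype Ω] [DecidableEq Ω]
    (m : Finset Ω → ℝ) (f : Ω → ℝ) : ℝ :=
  choquetSum m f (sortedEquiv f)

/-- The dual capacity `m'(A) = 1 - m(Ω \ A)`. -/
def dualCap {Ω : Type*} [Fintype Ω] [DecidableEq Ω]
    (m : Finset Ω → ℝ) (A : Finset Ω) : ℝ :=
  1 - m Aᶜ

/-- Supermodularity: `m(A ∪ B) + m(A ∩ B) ≥ m(A) + m(B)`. -/
def IsSupermodular {Ω : Type*} [DecidableEq Ω] (m : Finset Ω → ℝ) : Prop :=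
  ∀ A B : Finset Ω, m A + m B ≤ m (A ∪ B) + m (A ∩ B)

/-- Submodularity: `m(A ∪ B) + m(A ∩ B) ≤ m(A) + m(B)`. -/
def IsSubmodular {Ω : Type*} [DecidableEq Ω] (m : Finset Ω → ℝ) : Prop :=
  ∀ A B : Finset Ω, m (A ∪ B) + m (A ∩ B) ≤ m A + m B

/-- A probability vector on a finite type `Ω`. -/
def IsProbVector {Ω : Type*} [Fintype Ω] (P : Ω → ℝ) : Prop :=
  (∀ ω, 0 ≤ P ω) ∧ ∑ ω, P ω = 1

/-- Membership in the core of a capacity `m`. -/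
def memCore {Ω : Type*} [Fintype Ω] (m : Finset Ω → ℝ) (P : Ω → ℝ) : Prop :=
  IsProbVector P ∧ ∀ A : Finset Ω, m A ≤ ∑ ω ∈ A, P ω

/-- The λ-rule set function `m_λ(A) = (∏_{ω ∈ A} (1 + λ g(ω)) - 1) / λ`. -/
noncomputable def mLam {Ω : Type*} (lam : ℝ) (g : Ω → ℝ) (A : Finset Ω) : ℝ :=
  ((∏ ω ∈ A, (1 + lam * g ω)) - 1) / lam
section Aux

variable {Ω : Type*} [Fintype Ω] [DecidableEq Ω]

lemma mem_prefSet_iff (σ : Fin (Fintype.card Ω) ≃ Ω) (k : ℕ) (ω : Ω) :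
    ω ∈ prefSet σ k ↔ ((σ.symm ω : ℕ) < k) := by
  constructor
  · intro h
    rcases Finset.mem_image.1 h with ⟨j, hj, rfl⟩
    simpa using (Finset.mem_filter.1 hj).2
  · intro h
    exact Finset.mem_image.2 ⟨σ.symm ω, Finset.mem_filter.2 ⟨Finset.mem_univ _, h⟩,
      σ.apply_symm_apply ω⟩

lemma prefSet_zero (σ : Fin (Fintype.card Ω) ≃ Ω) : prefSet σ 0 = ∅ := by
  ext ω; simp [mem_prefSet_iff]

lemma prefSet_mono (σ : Fin (Fintype.card Ω) ≃ Ω) {k l : ℕ} (h : k ≤ l) :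
    prefSet σ k ⊆ prefSet σ l := by
  intro ω hω
  rw [mem_prefSet_iff] at hω ⊢
  omega

lemma prefSet_univ (σ : Fin (Fintype.card Ω) ≃ Ω) {k : ℕ} (h : Fintype.card Ω ≤ k) :
    prefSet σ k = Finset.univ := by
  ext ω
  simp only [mem_prefSet_iff, Finset.mem_univ, iff_true]
  exact lt_of_lt_of_le (σ.symm ω).isLt h

lemma prefSet_succ (σ : Fin (Fintype.card Ω) ≃ Ω) (i : ℕ) (h : i < Fintype.card Ω) :
    prefSet σ (i + 1) = insert (σ ⟨i, h⟩) (prefSet σ i) := by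
  ext ω
  simp only [mem_prefSet_iff, Finset.mem_insert]
  constructor
  · intro hlt
    rcases Nat.lt_succ_iff_lt_or_eq.1 hlt with h' | h'
    · exact Or.inr h'
    · left
      have : σ.symm ω = ⟨i, h⟩ := Fin.ext h'
      rw [← this, σ.apply_symm_apply]
  · rintro (rfl | h')
    · simp [Nat.lt_succ_iff]
    · exact Nat.lt_succ_of_lt h'

lemma not_mem_prefSet_self (σ : Fin (Fintype.card Ω) ≃ Ω) (i : ℕ) (h : i < Fintype.card Ω) :
    σ ⟨i, h⟩ ∉ prefSet σ i := by
  simp [mem_prefSet_iff]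

lemma sum_sub_prefSet (σ : Fin (Fintype.card Ω) ≃ Ω) (μ : Finset Ω → ℝ) (hμ : μ ∅ = 0)
    (k : ℕ) :
    ∑ i ∈ Finset.range k, (μ (prefSet σ (i + 1)) - μ (prefSet σ i)) = μ (prefSet σ k) := by
  rw [Finset.sum_range_sub (fun i => μ (prefSet σ i)) k, prefSet_zero, hμ, sub_zero]

/-- Abel summation specialized to prefix differences. -/
lemma abel_pref (σ : Fin (Fintype.card Ω) ≃ Ω) (F : ℕ → ℝ) (μ : Finset Ω → ℝ)
    (hμ : μ ∅ = 0) (n : ℕ) :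
    ∑ i ∈ Finset.range n, F i * (μ (prefSet σ (i + 1)) - μ (prefSet σ i)) =
      F (n - 1) * μ (prefSet σ n) -
        ∑ i ∈ Finset.range (n - 1), (F (i + 1) - F i) * μ (prefSet σ (i + 1)) := by
  have h := Finset.sum_range_by_parts F
    (fun i => μ (prefSet σ (i + 1)) - μ (prefSet σ i)) n
  simp only [smul_eq_mul, sum_sub_prefSet σ μ hμ] at h
  exact h

end Aux

/-- for supermodular capacities, the Choquet integral is the minimum
of expectations over the core, and the minimum is attained. -/
theorem choquet_eq_min_core {Ω : Type*} [Fintype Ω] [DecidableEq Ω] [Nonempty Ω]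
    (m : Finset Ω → ℝ) (hm : IsCapacity m) (hsm : IsSupermodular m) (f : Ω → ℝ) :
    (∃ P : Ω → ℝ, memCore m P ∧ ∑ ω, P ω * f ω = choquet m f) ∧
    (∀ P : Ω → ℝ, memCore m P → choquet m f ≤ ∑ ω, P ω * f ω) := by
  classical
  obtain ⟨hm0, hm1, hmono⟩ := hm
  set σ : Fin (Fintype.card Ω) ≃ Ω := sortedEquiv f with hσdef
  have hsort : ∀ i j : Fin (Fintype.card Ω), i ≤ j → f (σ j) ≤ f (σ i) := by
    intro i j hij
    have h := Tuple.monotone_sort (fun k => -f ((Fintype.equivFin Ω).symm k)) hij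
    simp only [Function.comp_apply, neg_le_neg_iff] at h
    simpa [hσdef, sortedEquiv, Equiv.trans_apply] using h
  set F : ℕ → ℝ := fun k => if h : k < Fintype.card Ω then f (σ ⟨k, h⟩) else 0 with hF
  have hchq : ∀ μ : Finset Ω → ℝ,
      (∑ i : Fin (Fintype.card Ω),
          f (σ i) * (μ (prefSet σ ((i : ℕ) + 1)) - μ (prefSet σ (i : ℕ)))) =
      ∑ i ∈ Finset.range (Fintype.card Ω),
          F i * (μ (prefSet σ (i + 1)) - μ (prefSet σ i)) := by
    intro μ
    rw [← Fin.sum_univ_eq_sum_range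
      (fun k => F k * (μ (prefSet σ (k + 1)) - μ (prefSet σ k)))]
    refine Finset.sum_congr rfl fun i _ => ?_
    simp [hF, i.isLt]
  -- The minimizer
  set Pstar : Ω → ℝ := fun ω =>
    m (prefSet σ ((σ.symm ω : ℕ) + 1)) - m (prefSet σ (σ.symm ω : ℕ)) with hPs
  have hPsApp : ∀ i : Fin (Fintype.card Ω),
      Pstar (σ i) = m (prefSet σ ((i : ℕ) + 1)) - m (prefSet σ (i : ℕ)) := by
    intro i; simp [hPs]
  have hPsNonneg : ∀ ω, 0 ≤ Pstar ω := by
    intro ω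
    simp only [hPs]
    have := hmono (prefSet_mono σ (Nat.le_succ (σ.symm ω : ℕ)))
    linarith
  have hPsSum : ∑ ω, Pstar ω = 1 := by
    rw [← Equiv.sum_comp σ Pstar]
    calc ∑ i : Fin (Fintype.card Ω), Pstar (σ i)
        = ∑ i ∈ Finset.range (Fintype.card Ω),
            (m (prefSet σ (i + 1)) - m (prefSet σ i)) := by
          rw [← Fin.sum_univ_eq_sum_range
            (fun k => m (prefSet σ (k + 1)) - m (prefSet σ k))]
          exact Finset.sum_congr rfl fun i _ => hPsApp i
      _ = m (prefSet σ (Fintype.card Ω)) := sum_sub_prefSet σ m hm0 _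
      _ = 1 := by rw [prefSet_univ σ le_rfl, hm1]
  have hPsCore : ∀ A : Finset Ω, m A ≤ ∑ ω ∈ A, Pstar ω := by
    intro A
    have key : ∀ i ∈ Finset.range (Fintype.card Ω),
        m (A ∩ prefSet σ (i + 1)) - m (A ∩ prefSet σ i) ≤
          (if h : i < Fintype.card Ω then
            (if σ ⟨i, h⟩ ∈ A then m (prefSet σ (i + 1)) - m (prefSet σ i) else 0)
          else 0) := by
      intro i hi
      have h : i < Fintype.card Ω := Finset.mem_range.1 hi
      rw [dif_pos h]
      by_cases hA : σ ⟨i, h⟩ ∈ A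
      · rw [if_pos hA]
        have hU : (A ∩ prefSet σ (i + 1)) ∪ prefSet σ i = prefSet σ (i + 1) := by
          rw [prefSet_succ σ i h]
          ext x
          simp only [Finset.mem_union, Finset.mem_inter, Finset.mem_insert]
          constructor
          · rintro (⟨_, hx⟩ | hx)
            · exact hx
            · exact Or.inr hx
          · rintro (rfl | hx)
            · exact Or.inl ⟨hA, Or.inl rfl⟩
            · exact Or.inr hx
        have hI : (A ∩ prefSet σ (i + 1)) ∩ prefSet σ i = A ∩ prefSet σ i := by
          rw [Finset.inter_assoc,
            Finset.inter_eq_right.2 (prefSet_mono σ (Nat.le_succ i))]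
        have hs := hsm (A ∩ prefSet σ (i + 1)) (prefSet σ i)
        rw [hU, hI] at hs
        linarith
      · rw [if_neg hA]
        have heq : A ∩ prefSet σ (i + 1) = A ∩ prefSet σ i := by
          rw [prefSet_succ σ i h]
          ext x
          simp only [Finset.mem_inter, Finset.mem_insert]
          constructor
          · rintro ⟨hxA, (rfl | hx)⟩
            · exact absurd hxA hA
            · exact ⟨hxA, hx⟩
          · rintro ⟨hxA, hx⟩
            exact ⟨hxA, Or.inr hx⟩
        rw [heq, sub_self]
    have h1 : m A = ∑ i ∈ Finset.range (Fintype.card Ω),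
        (m (A ∩ prefSet σ (i + 1)) - m (A ∩ prefSet σ i)) := by
      rw [Finset.sum_range_sub (fun k => m (A ∩ prefSet σ k)), prefSet_zero,
        prefSet_univ σ le_rfl, Finset.inter_empty, Finset.inter_univ, hm0, sub_zero]
    have h2 : ∑ ω ∈ A, Pstar ω = ∑ i ∈ Finset.range (Fintype.card Ω),
        (if h : i < Fintype.card Ω then
          (if σ ⟨i, h⟩ ∈ A then m (prefSet σ (i + 1)) - m (prefSet σ i) else 0)
        else 0) := by
      calc ∑ ω ∈ A, Pstar ω
          = ∑ ω, if ω ∈ A then Pstar ω else 0 := by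
            rw [Finset.sum_ite_mem, Finset.univ_inter]
        _ = ∑ i : Fin (Fintype.card Ω), (if σ i ∈ A then Pstar (σ i) else 0) :=
            (Equiv.sum_comp σ _).symm
        _ = _ := by
            rw [← Fin.sum_univ_eq_sum_range (fun k =>
              if h : k < Fintype.card Ω then
                (if σ ⟨k, h⟩ ∈ A then m (prefSet σ (k + 1)) - m (prefSet σ k) else 0)
              else 0)]
            refine Finset.sum_congr rfl fun i _ => ?_
            simp [i.isLt, hPsApp]
    rw [h1, h2]
    exact Finset.sum_le_sum key
  have hchoq : choquet m f = ∑ i ∈ Finset.range (Fintype.card Ω),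
      F i * (m (prefSet σ (i + 1)) - m (prefSet σ i)) := by
    unfold choquet choquetSum
    rw [← hσdef]
    exact hchq m
  have hmin : ∀ P : Ω → ℝ, memCore m P → choquet m f ≤ ∑ ω, P ω * f ω := by
    intro P hP
    obtain ⟨⟨hP0, hP1⟩, hPcore⟩ := hP
    set Phat : Finset Ω → ℝ := fun A => ∑ ω ∈ A, P ω with hPhat
    have hp0 : Phat ∅ = 0 := Finset.sum_empty
    have hEP : ∑ ω, P ω * f ω =
        ∑ i ∈ Finset.range (Fintype.card Ω),
          F i * (Phat (prefSet σ (i + 1)) - Phat (prefSet σ i)) := by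
      rw [← hchq Phat, ← Equiv.sum_comp σ (fun ω => P ω * f ω)]
      refine Finset.sum_congr rfl fun i _ => ?_
      have hd : Phat (prefSet σ ((i : ℕ) + 1)) - Phat (prefSet σ (i : ℕ)) = P (σ i) := by
        simp only [hPhat]
        rw [prefSet_succ σ (i : ℕ) i.isLt,
          Finset.sum_insert (not_mem_prefSet_self σ (i : ℕ) i.isLt), Fin.eta]
        exact add_sub_cancel_right _ _
      rw [hd]
      ring
    rw [hchoq, hEP, abel_pref σ F m hm0, abel_pref σ F Phat hp0]
    have hend : Phat (prefSet σ (Fintype.card Ω)) = m (prefSet σ (Fintype.card Ω)) := by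
      rw [prefSet_univ σ le_rfl, hm1]
      exact hP1
    rw [hend]
    apply sub_le_sub_left
    apply Finset.sum_le_sum
    intro i hi
    have hi' : i + 1 < Fintype.card Ω := by
      have := Finset.mem_range.1 hi; omega
    have h0 : i < Fintype.card Ω := by omega
    have hFle : F (i + 1) ≤ F i := by
      simp only [hF, dif_pos hi', dif_pos h0]
      exact hsort ⟨i, h0⟩ ⟨i + 1, hi'⟩ (Fin.mk_le_mk.2 (Nat.le_succ i))
    have hmc : m (prefSet σ (i + 1)) ≤ Phat (prefSet σ (i + 1)) := hPcore _
    exact mul_le_mul_of_nonpos_left hmc (by linarith)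
  refine ⟨⟨Pstar, ⟨⟨hPsNonneg, hPsSum⟩, hPsCore⟩, ?_⟩, hmin⟩
  unfold choquet choquetSum
  rw [← hσdef, ← Equiv.sum_comp σ (fun ω => Pstar ω * f ω)]
  refine Finset.sum_congr rfl fun i _ => ?_
  rw [hPsApp i]
  ring
end

section
/- γ-contraction of the fuzzy Bellman operator: let S and A be nonempty finite sets, γ ∈ [0,1), r : S × A → ℝ, π(·|s) a probability vector on A for each s ∈ S, and for each (s,a) ∈ S × A let 𝒫(s,a) be a nonempty finite set of probability vectors on S equipped with a capacity m_{s,a}. Define the fuzzy Bellman operator F on functions V : S → ℝ by F(V)(s) = Σ_{a∈A} π(a|s)·[ r(s,a) + γ·(C)∫_{𝒫(s,a)} (p ↦ Σ_{s'∈S} p(s') V(s')) dm_{s,a} ]. Then for all V₁, V₂ : S → ℝ, max_{s∈S} |F(V₁)(s) − F(V₂)(s)| ≤ γ · max_{s∈S} |V₁(s) − V₂(s)|. -/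
open Finset Filter

section Helpers

variable {Ω : Type*} [Fintype Ω] [DecidableEq Ω]

lemma mem_prefSet {σ : Fin (Fintype.card Ω) ≃ Ω} {k : ℕ} {ω : Ω} :
    ω ∈ prefSet σ k ↔ ((σ.symm ω : Fin (Fintype.card Ω)) : ℕ) < k := by
  simp only [prefSet, Finset.mem_image, Finset.mem_filter, Finset.mem_univ, true_and]
  constructor
  · rintro ⟨j, hj, rfl⟩; simpa using hj
  · intro h; exact ⟨σ.symm ω, h, σ.apply_symm_apply ω⟩

lemma prefSet_card (σ : Fin (Fintype.card Ω) ≃ Ω) {k : ℕ} (hk : Fintype.card Ω ≤ k) :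
    prefSet σ k = Finset.univ := by
  ext ω; simp only [mem_prefSet, Finset.mem_univ, iff_true]
  exact lt_of_lt_of_le (σ.symm ω).isLt hk

lemma sortedEquiv_sorted (f : Ω → ℝ) :
    ∀ i j : Fin (Fintype.card Ω), i ≤ j → f (sortedEquiv f j) ≤ f (sortedEquiv f i) := by
  intro i j hij
  have := Tuple.monotone_sort (fun i => -f ((Fintype.equivFin Ω).symm i)) hij
  simp only [Function.comp_apply] at this
  have h2 : -f ((Fintype.equivFin Ω).symm (Tuple.sort (fun i => -f ((Fintype.equivFin Ω).symm i)) i))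
      ≤ -f ((Fintype.equivFin Ω).symm (Tuple.sort (fun i => -f ((Fintype.equivFin Ω).symm i)) j)) := this
  simpa [sortedEquiv] using neg_le_neg_iff.mp (by linarith)

end Helpers

section Helpers2

set_option linter.unusedSectionVars false

variable {Ω : Type*} [Fintype Ω] [DecidableEq Ω]

/-- Abel-type summation identity. -/
lemma key_sum (p q : ℕ → ℝ) (hq0 : q 0 = 0) (n : ℕ) :
    ∑ i ∈ Finset.range n, p (i+1) * (q (i+1) - q i)
      = p (n+1) * q n + ∑ i ∈ Finset.range (n+1), (p i - p (i+1)) * q i := by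
  induction n with
  | zero => simp [hq0]
  | succ n ih =>
    rw [Finset.sum_range_succ, ih, Finset.sum_range_succ (n := n+1)]
    ring

/-- Identification of upper level sets with prefix sets along a sorted enumeration. -/
lemma level_eq (f : Ω → ℝ) (σ : Fin (Fintype.card Ω) ≃ Ω)
    (hσ : ∀ i j : Fin (Fintype.card Ω), i ≤ j → f (σ j) ≤ f (σ i))
    (k : ℕ) (hk : k ≤ Fintype.card Ω) (t : ℝ)
    (ht1 : ∀ h : k < Fintype.card Ω, f (σ ⟨k, h⟩) ≤ t)
    (ht2 : ∀ j : Fin (Fintype.card Ω), (j : ℕ) < k → t < f (σ j)) :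
    (Finset.univ.filter fun ω => t < f ω) = prefSet σ k := by
  ext ω
  simp only [Finset.mem_filter, Finset.mem_univ, true_and, mem_prefSet]
  constructor
  · intro ht
    by_contra hcon
    push_neg at hcon
    have hkn : k < Fintype.card Ω := lt_of_le_of_lt hcon (σ.symm ω).isLt
    have h1 : f (σ (σ.symm ω)) ≤ f (σ ⟨k, hkn⟩) := hσ ⟨k, hkn⟩ (σ.symm ω) (by
      simpa [Fin.le_def] using hcon)
    rw [σ.apply_symm_apply] at h1
    exact absurd ht (not_lt.mpr (h1.trans (ht1 hkn)))
  · intro h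
    have := ht2 (σ.symm ω) h
    simpa using this

/-- The Choquet sum along any sorted enumeration equals `a + ∫ t in a..b, m {f > t}`. -/
lemma choquetSum_repr [Nonempty Ω] (m : Finset Ω → ℝ) (hm : IsCapacity m)
    (f : Ω → ℝ) (σ : Fin (Fintype.card Ω) ≃ Ω)
    (hσ : ∀ i j : Fin (Fintype.card Ω), i ≤ j → f (σ j) ≤ f (σ i))
    (a b : ℝ) (ha : ∀ ω, a ≤ f ω) (hb : ∀ ω, f ω ≤ b) :
    choquetSum m f σ
      = a + ∫ t in a..b, m (Finset.univ.filter fun ω => t < f ω) := by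
  classical
  have hn0 : 0 < Fintype.card Ω := Fintype.card_pos
  set G : ℝ → ℝ := fun t => m (Finset.univ.filter fun ω => t < f ω) with hG
  set q : ℕ → ℝ := fun k => m (prefSet σ k) with hq
  set p : ℕ → ℝ := fun i =>
    if h : 1 ≤ i ∧ i ≤ Fintype.card Ω then f (σ ⟨i - 1, by omega⟩)
    else if i = 0 then b else a
    with hp
  have hq0 : q 0 = 0 := by simp [hq, prefSet_zero, hm.1]
  have hqn : q (Fintype.card Ω) = 1 := by simp [hq, prefSet_card σ le_rfl, hm.2.1]
  -- G is antitone
  have hGanti : Antitone G := by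
    intro s t hst
    apply hm.2.2
    intro ω hω
    simp only [Finset.mem_filter, Finset.mem_univ, true_and] at hω ⊢
    exact lt_of_le_of_lt hst hω
  -- evaluating p
  have hpval : ∀ i (h1 : 1 ≤ i) (h2 : i ≤ Fintype.card Ω),
      p i = f (σ ⟨i - 1, by omega⟩) := by
    intro i h1 h2
    simp only [hp]
    rw [dif_pos (And.intro h1 h2)]
  have hp0 : p 0 = b := by
    simp only [hp]
    rw [dif_neg (by omega)]
    simp
  have hpa : ∀ i, Fintype.card Ω + 1 ≤ i → p i = a := by
    intro i h
    simp only [hp]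
    rw [dif_neg (by omega), if_neg (by omega)]
  have hpn1 : p (Fintype.card Ω + 1) = a := hpa _ le_rfl
  -- p is weakly decreasing
  have hpdec : ∀ i, p (i + 1) ≤ p i := by
    intro i
    by_cases h0 : i = 0
    · subst h0
      rw [hp0, hpval 1 le_rfl hn0]
      exact hb _
    · by_cases h2 : i + 1 ≤ Fintype.card Ω
      · rw [hpval (i+1) (by omega) h2, hpval i (by omega) (by omega)]
        exact hσ ⟨i - 1, by omega⟩ ⟨i + 1 - 1, by omega⟩ (by simp only [Fin.le_def]; omega)
      · by_cases h3 : i ≤ Fintype.card Ω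
        · rw [hpa (i+1) (by omega), hpval i (by omega) h3]
          exact ha _
        · rw [hpa (i+1) (by omega), hpa i (by omega)]
  -- value of each interval integral
  have hstep : ∀ i ≤ Fintype.card Ω,
      (∫ t in p (i+1)..p i, G t) = (p i - p (i+1)) * q i := by
    intro i hi
    have hconst : ∀ t ∈ Set.Ico (p (i+1)) (p i), G t = q i := by
      intro t ht
      simp only [hG, hq]
      congr 1
      apply level_eq f σ hσ i hi t
      · intro h
        have he : p (i + 1) = f (σ ⟨i, h⟩) := by
          rw [hpval (i+1) (by omega) (by omega)]
          congr 1
        exact he ▸ ht.1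
      · intro j hj
        have hpi : p i = f (σ ⟨i - 1, by omega⟩) := hpval i (by omega) hi
        refine lt_of_lt_of_le ht.2 ?_
        rw [hpi]
        exact hσ j ⟨i - 1, by omega⟩ (by simp only [Fin.le_def]; omega)
    have hae : ∀ᵐ t ∂MeasureTheory.volume,
        t ∈ Set.uIoc (p (i+1)) (p i) → G t = q i := by
      have hne : ∀ᵐ t : ℝ ∂MeasureTheory.volume, t ≠ p i := by
        rw [MeasureTheory.ae_iff]
        have he : {t : ℝ | ¬ t ≠ p i} = {p i} := by ext t; simp
        rw [he]
        exact Real.volume_singleton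
      filter_upwards [hne] with t htne ht
      rw [Set.uIoc_of_le (hpdec i)] at ht
      exact hconst t ⟨le_of_lt ht.1, lt_of_le_of_ne ht.2 htne⟩
    rw [intervalIntegral.integral_congr_ae hae, intervalIntegral.integral_const,
      smul_eq_mul]
  -- sum the adjacent intervals
  have hint : ∀ k, k < Fintype.card Ω + 1 →
      IntervalIntegrable G MeasureTheory.volume (p k) (p (k+1)) :=
    fun k _ => hGanti.intervalIntegrable
  have hadj := intervalIntegral.sum_integral_adjacent_intervals hint
  rw [hp0, hpn1] at hadj
  have hintval : (∫ t in a..b, G t)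
      = ∑ i ∈ Finset.range (Fintype.card Ω + 1), (p i - p (i+1)) * q i := by
    rw [intervalIntegral.integral_symm b a, ← hadj, ← Finset.sum_neg_distrib]
    apply Finset.sum_congr rfl
    intro i hi
    rw [← intervalIntegral.integral_symm, hstep i (Nat.lt_succ_iff.mp (Finset.mem_range.mp hi))]
  -- assemble
  have hcs : choquetSum m f σ
      = ∑ i ∈ Finset.range (Fintype.card Ω), p (i+1) * (q (i+1) - q i) := by
    have h1 : choquetSum m f σ
        = ∑ i : Fin (Fintype.card Ω), p ((i : ℕ)+1) * (q ((i : ℕ)+1) - q (i : ℕ)) := by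
      apply Finset.sum_congr rfl
      intro i _
      have he : p ((i : ℕ) + 1) = f (σ i) := by
        rw [hpval ((i : ℕ)+1) (by omega) (by omega)]
        congr 1
      rw [he]
    rw [h1, Fin.sum_univ_eq_sum_range (fun i => p (i+1) * (q (i+1) - q i))]
  rw [hcs, key_sum p q hq0, hintval, hpn1, hqn, mul_one]

/-- The Choquet integral along any sorted enumeration equals `choquet`. -/
lemma choquetSum_sorted_eq [Nonempty Ω] (m : Finset Ω → ℝ) (hm : IsCapacity m)
    (f : Ω → ℝ) (σ : Fin (Fintype.card Ω) ≃ Ω)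
    (hσ : ∀ i j : Fin (Fintype.card Ω), i ≤ j → f (σ j) ≤ f (σ i)) :
    choquetSum m f σ = choquet m f := by
  have ha : ∀ ω, Finset.univ.inf' Finset.univ_nonempty f ≤ f ω :=
    fun ω => Finset.inf'_le f (Finset.mem_univ ω)
  have hb : ∀ ω, f ω ≤ Finset.univ.sup' Finset.univ_nonempty f :=
    fun ω => Finset.le_sup' f (Finset.mem_univ ω)
  rw [choquetSum_repr m hm f σ hσ _ _ ha hb, choquet,
    choquetSum_repr m hm f (sortedEquiv f) (sortedEquiv_sorted f) _ _ ha hb]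

lemma choquet_mono [Nonempty Ω] (m : Finset Ω → ℝ) (hm : IsCapacity m)
    (f g : Ω → ℝ) (hfg : ∀ ω, f ω ≤ g ω) : choquet m f ≤ choquet m g := by
  classical
  set a : ℝ := Finset.univ.inf' Finset.univ_nonempty f with ha'
  set b : ℝ := Finset.univ.sup' Finset.univ_nonempty g with hb'
  have haf : ∀ ω, a ≤ f ω := fun ω => Finset.inf'_le f (Finset.mem_univ ω)
  have hag : ∀ ω, a ≤ g ω := fun ω => (haf ω).trans (hfg ω)
  have hbg : ∀ ω, g ω ≤ b := fun ω => Finset.le_sup' g (Finset.mem_univ ω)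
  have hbf : ∀ ω, f ω ≤ b := fun ω => (hfg ω).trans (hbg ω)
  have hab : a ≤ b := by
    obtain ⟨ω⟩ := ‹Nonempty Ω›
    exact (haf ω).trans (hbf ω)
  rw [choquet, choquetSum_repr m hm f (sortedEquiv f) (sortedEquiv_sorted f) a b haf hbf,
    choquet, choquetSum_repr m hm g (sortedEquiv g) (sortedEquiv_sorted g) a b hag hbg]
  gcongr
  apply intervalIntegral.integral_mono_on hab
  · exact Antitone.intervalIntegrable (by
      intro s t hst
      apply hm.2.2
      intro ω hω
      simp only [Finset.mem_filter, Finset.mem_univ, true_and] at hω ⊢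
      exact lt_of_le_of_lt hst hω)
  · exact Antitone.intervalIntegrable (by
      intro s t hst
      apply hm.2.2
      intro ω hω
      simp only [Finset.mem_filter, Finset.mem_univ, true_and] at hω ⊢
      exact lt_of_le_of_lt hst hω)
  · intro t _
    apply hm.2.2
    intro ω hω
    simp only [Finset.mem_filter, Finset.mem_univ, true_and] at hω ⊢
    exact lt_of_lt_of_le hω (hfg ω)

lemma choquetSum_add_const (m : Finset Ω → ℝ) (hm : IsCapacity m)
    (f : Ω → ℝ) (c : ℝ) (σ : Fin (Fintype.card Ω) ≃ Ω) :
    choquetSum m (fun ω => f ω + c) σ = choquetSum m f σ + c := by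
  unfold choquetSum
  have htel : ∑ i : Fin (Fintype.card Ω),
      (m (prefSet σ ((i : ℕ) + 1)) - m (prefSet σ (i : ℕ))) = 1 := by
    rw [Fin.sum_univ_eq_sum_range (fun i => m (prefSet σ (i + 1)) - m (prefSet σ i)),
      Finset.sum_range_sub (fun i => m (prefSet σ i))]
    rw [prefSet_zero, prefSet_card σ le_rfl, hm.1, hm.2.1, sub_zero]
  calc ∑ i : Fin (Fintype.card Ω),
      (f (σ i) + c) * (m (prefSet σ ((i : ℕ) + 1)) - m (prefSet σ (i : ℕ)))
      = ∑ i : Fin (Fintype.card Ω),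
        (f (σ i) * (m (prefSet σ ((i : ℕ) + 1)) - m (prefSet σ (i : ℕ)))
          + c * (m (prefSet σ ((i : ℕ) + 1)) - m (prefSet σ (i : ℕ)))) := by
        apply Finset.sum_congr rfl; intro i _; ring
    _ = _ := by rw [Finset.sum_add_distrib, ← Finset.mul_sum, htel, mul_one]

lemma choquet_add_const [Nonempty Ω] (m : Finset Ω → ℝ) (hm : IsCapacity m)
    (f : Ω → ℝ) (c : ℝ) :
    choquet m (fun ω => f ω + c) = choquet m f + c := by
  have hσ : ∀ i j : Fin (Fintype.card Ω), i ≤ j →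
      f (sortedEquiv (fun ω => f ω + c) j) ≤ f (sortedEquiv (fun ω => f ω + c) i) := by
    intro i j hij
    have h2 := sortedEquiv_sorted (fun ω => f ω + c) i j hij
    linarith
  rw [choquet, choquetSum_add_const m hm f c,
    choquetSum_sorted_eq m hm f (sortedEquiv (fun ω => f ω + c)) hσ]

lemma choquet_lipschitz [Nonempty Ω] (m : Finset Ω → ℝ) (hm : IsCapacity m)
    (f g : Ω → ℝ) (c : ℝ) (h : ∀ ω, |f ω - g ω| ≤ c) :
    |choquet m f - choquet m g| ≤ c := by
  rw [abs_le]
  constructor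
  · have h1 : ∀ ω, g ω ≤ f ω + c := by
      intro ω; have := (abs_le.mp (h ω)).1; linarith
    have := choquet_mono m hm g (fun ω => f ω + c) h1
    rw [choquet_add_const m hm f c] at this
    linarith
  · have h1 : ∀ ω, f ω ≤ g ω + c := by
      intro ω; have := (abs_le.mp (h ω)).2; linarith
    have := choquet_mono m hm f (fun ω => g ω + c) h1
    rw [choquet_add_const m hm g c] at this
    linarith

end Helpers2

/-- γ-contraction of the fuzzy Bellman operator. -/
theorem fuzzy_bellman_contraction
    {S A : Type*} [Fintype S] [Nonempty S] [Fintype A] [Nonempty A]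
    (γ : ℝ) (hγ0 : 0 ≤ γ) (hγ1 : γ < 1)
    (r : S → A → ℝ)
    (pol : S → A → ℝ) (hpol : ∀ s, IsProbVector (pol s))
    (P : S → A → Type*) [∀ s a, Fintype (P s a)] [∀ s a, DecidableEq (P s a)]
    [∀ s a, Nonempty (P s a)]
    (p : ∀ s a, P s a → S → ℝ) (hp : ∀ s a k, IsProbVector (p s a k))
    (m : ∀ s a, Finset (P s a) → ℝ) (hm : ∀ s a, IsCapacity (m s a))
    (F : (S → ℝ) → (S → ℝ))
    (hF : ∀ V s, F V s =
      ∑ a, pol s a *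
        (r s a + γ * choquet (m s a) (fun k => ∑ s', p s a k s' * V s')))
    (V₁ V₂ : S → ℝ) :
    (Finset.univ.sup' Finset.univ_nonempty fun s => |F V₁ s - F V₂ s|) ≤
      γ * Finset.univ.sup' Finset.univ_nonempty fun s => |V₁ s - V₂ s| := by
  classical
  set D : ℝ := Finset.univ.sup' Finset.univ_nonempty fun s => |V₁ s - V₂ s| with hD'
  have hD : ∀ s', |V₁ s' - V₂ s'| ≤ D :=
    fun s' => Finset.le_sup' (fun s => |V₁ s - V₂ s|) (Finset.mem_univ s')
  have hD0 : 0 ≤ D := by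
    obtain ⟨s₀⟩ := ‹Nonempty S›
    exact (abs_nonneg _).trans (hD s₀)
  apply Finset.sup'_le
  intro s _
  -- Lipschitz bound for each Choquet term
  have hC : ∀ a : A,
      |choquet (m s a) (fun k => ∑ s', p s a k s' * V₁ s')
        - choquet (m s a) (fun k => ∑ s', p s a k s' * V₂ s')| ≤ D := by
    intro a
    apply choquet_lipschitz (m s a) (hm s a)
    intro k
    have h1 : (∑ s', p s a k s' * V₁ s') - (∑ s', p s a k s' * V₂ s')
        = ∑ s', p s a k s' * (V₁ s' - V₂ s') := by
      rw [← Finset.sum_sub_distrib]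
      apply Finset.sum_congr rfl
      intro s' _; ring
    rw [h1]
    calc |∑ s', p s a k s' * (V₁ s' - V₂ s')|
        ≤ ∑ s', |p s a k s' * (V₁ s' - V₂ s')| := Finset.abs_sum_le_sum_abs _ _
      _ ≤ ∑ s', p s a k s' * D := by
          apply Finset.sum_le_sum
          intro s' _
          rw [abs_mul, abs_of_nonneg ((hp s a k).1 s')]
          exact mul_le_mul_of_nonneg_left (hD s') ((hp s a k).1 s')
      _ = D := by rw [← Finset.sum_mul, (hp s a k).2, one_mul]
  rw [hF, hF, ← Finset.sum_sub_distrib]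
  have h2 : ∀ a : A,
      pol s a * (r s a + γ * choquet (m s a) (fun k => ∑ s', p s a k s' * V₁ s'))
        - pol s a * (r s a + γ * choquet (m s a) (fun k => ∑ s', p s a k s' * V₂ s'))
      = pol s a * (γ * (choquet (m s a) (fun k => ∑ s', p s a k s' * V₁ s')
          - choquet (m s a) (fun k => ∑ s', p s a k s' * V₂ s'))) := by
    intro a; ring
  calc |∑ a, (pol s a * (r s a + γ * choquet (m s a) (fun k => ∑ s', p s a k s' * V₁ s'))
        - pol s a * (r s a + γ * choquet (m s a) (fun k => ∑ s', p s a k s' * V₂ s')))|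
      ≤ ∑ a, |pol s a * (γ * (choquet (m s a) (fun k => ∑ s', p s a k s' * V₁ s')
          - choquet (m s a) (fun k => ∑ s', p s a k s' * V₂ s')))| := by
        rw [Finset.sum_congr rfl (fun a _ => h2 a)]
        exact Finset.abs_sum_le_sum_abs _ _
    _ ≤ ∑ a, pol s a * (γ * D) := by
        apply Finset.sum_le_sum
        intro a _
        rw [abs_mul, abs_of_nonneg ((hpol s).1 a), abs_mul, abs_of_nonneg hγ0]
        exact mul_le_mul_of_nonneg_left
          (mul_le_mul_of_nonneg_left (hC a) hγ0) ((hpol s).1 a)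
    _ = γ * D := by rw [← Finset.sum_mul, (hpol s).2, one_mul]
end
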